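/- The characteristic polynomial of the $(n-1)\times(n-1)$ matrix $M=D(I-\Lambda J)+z_n\Lambda J$ equals $q(z)$, where $q$ is the monic polynomial of degree $n-1$ defined by $q(z)/p(z)=\sum_{j=1}^n \lambda_j/(z-z_j)$. -/

import Mathlib

open Polynomial Finset Matrix

-- determinant of diagonal plus rank one, over a field
lemma det_diag_add_rankone {F : Type*} [Field F] {m : ℕ} (d u : Fin m → F)
    (hd : ∀ i, d i ≠ 0) :
    (Matrix.diagonal d + Matrix.replicateCol (Fin 1) u * Matrix.replicateRow (Fin 1) (fun _ => (1:F))).det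
      = ∏ i, d i + ∑ i, u i * ∏ k ∈ Finset.univ.erase i, d k := by
  have h : Matrix.diagonal d + Matrix.replicateCol (Fin 1) u * Matrix.replicateRow (Fin 1) (fun _ => (1:F))
      = Matrix.diagonal d *
        (1 + Matrix.replicateCol (Fin 1) (fun i => u i / d i) * Matrix.replicateRow (Fin 1) (fun _ => (1:F))) := by
    rw [Matrix.mul_add, Matrix.mul_one]
    congr 1
    ext i j
    simp only [Matrix.mul_apply, Matrix.replicateCol_apply, Matrix.replicateRow_apply, Matrix.diagonal_apply,
      Finset.sum_ite_eq, Finset.mem_univ, if_true]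
    simp only [Fin.sum_univ_one, mul_one, ite_mul, zero_mul, Finset.sum_ite_eq,
      Finset.mem_univ, if_true]
    rw [← mul_div_assoc, mul_comm (d i), mul_div_assoc, div_self (hd i), mul_one]
  rw [h, det_mul, det_diagonal]
  erw [Matrix.det_one_add_replicateCol_mul_replicateRow (ι := Fin 1) (fun i => u i / d i) (fun _ => (1:F))]
  rw [dotProduct]
  simp only [one_mul]
  rw [mul_add, mul_one, Finset.mul_sum]
  congr 1
  refine Finset.sum_congr rfl fun i _ => ?_
  rw [mul_comm (u i), ← Finset.prod_erase_mul _ _ (Finset.mem_univ i), mul_assoc]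
  congr 1
  rw [← mul_div_assoc, mul_comm (d i), mul_div_assoc, div_self (hd i), mul_one]

lemma prod_erase_fin {m : ℕ} (f : ℕ → Polynomial ℂ) (hf : ∀ k, f k ≠ 0) (i : Fin m) :
    ∏ k ∈ Finset.univ.erase i, f (k : ℕ) = ∏ k ∈ (Finset.range m).erase (i : ℕ), f k := by
  apply mul_left_cancel₀ (hf i)
  rw [Finset.mul_prod_erase Finset.univ (fun k : Fin m => f (k : ℕ)) (Finset.mem_univ i),
      Finset.mul_prod_erase (Finset.range m) f (Finset.mem_range.mpr i.isLt)]
  exact Fin.prod_univ_eq_prod_range (fun k => f k) m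

lemma poly_id (m : ℕ) (z lam : ℕ → ℂ)
    (hlam : ∑ j ∈ Finset.range (m + 1), lam j = 1) :
    ∏ i : Fin m, (X - C (z (i : ℕ))) +
      ∑ i : Fin m, C ((z (i : ℕ) - z m) * lam (i : ℕ)) *
        ∏ k ∈ Finset.univ.erase i, (X - C (z (k : ℕ)))
    = ∑ j ∈ Finset.range (m + 1), C (lam j) *
        ∏ i ∈ (Finset.range (m + 1)).erase j, (X - C (z i)) := by
  have hXC : ∀ k : ℕ, (X : Polynomial ℂ) - C (z k) ≠ 0 := fun k => X_sub_C_ne_zero _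
  have e1 : ∑ i : Fin m, C ((z (i : ℕ) - z m) * lam (i : ℕ)) *
        ∏ k ∈ Finset.univ.erase i, (X - C (z (k : ℕ)))
      = ∑ i ∈ Finset.range m, C ((z i - z m) * lam i) *
        ∏ k ∈ (Finset.range m).erase i, (X - C (z k)) := by
    rw [← Fin.sum_univ_eq_sum_range
      (fun i => C ((z i - z m) * lam i) * ∏ k ∈ (Finset.range m).erase i, (X - C (z k))) m]
    exact Finset.sum_congr rfl fun i _ => by
      rw [prod_erase_fin (fun k => X - C (z k)) hXC i]
  rw [e1, Fin.prod_univ_eq_prod_range (fun i => X - C (z i)) m]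
  rw [Finset.range_add_one, Finset.sum_insert Finset.notMem_range_self,
      Finset.erase_insert Finset.notMem_range_self]
  have expand : ∀ j ∈ Finset.range m,
      C (lam j) * ∏ i ∈ (insert m (Finset.range m)).erase j, (X - C (z i))
      = C (lam j) * ∏ i ∈ Finset.range m, (X - C (z i))
        + C ((z j - z m) * lam j) * ∏ i ∈ (Finset.range m).erase j, (X - C (z i)) := by
    intro j hj
    have hjm : j ≠ m := fun h => by simp [h] at hj
    rw [Finset.erase_insert_of_ne (Ne.symm hjm)]
    have hm : m ∉ (Finset.range m).erase j :=
      fun h => Finset.notMem_range_self (Finset.mem_of_mem_erase h)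
    rw [Finset.prod_insert hm]
    have hz : (X : Polynomial ℂ) - C (z m) = (X - C (z j)) + C (z j - z m) := by
      rw [map_sub]; ring
    rw [hz, add_mul, Finset.mul_prod_erase (Finset.range m) (fun i => X - C (z i)) hj, Polynomial.C_mul]
    ring
  rw [Finset.sum_congr rfl expand, Finset.sum_add_distrib, ← Finset.sum_mul]
  have hsum : C (lam m) + ∑ j ∈ Finset.range m, C (lam j) = 1 := by
    rw [← map_sum, ← map_add, ← Finset.sum_insert Finset.notMem_range_self,
        ← Finset.range_add_one, hlam, Polynomial.C_1]
  calc ∏ i ∈ Finset.range m, (X - C (z i)) +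
        ∑ i ∈ Finset.range m, C ((z i - z m) * lam i) *
          ∏ k ∈ (Finset.range m).erase i, (X - C (z k))
      = (C (lam m) + ∑ j ∈ Finset.range m, C (lam j)) * ∏ i ∈ Finset.range m, (X - C (z i)) +
        ∑ i ∈ Finset.range m, C ((z i - z m) * lam i) *
          ∏ k ∈ (Finset.range m).erase i, (X - C (z k)) := by rw [hsum, one_mul]
    _ = _ := by ring

lemma det_diag_add_rankone_poly (m : ℕ) (d u : Fin m → Polynomial ℂ) (hd : ∀ i, d i ≠ 0) :
    (Matrix.diagonal d + Matrix.replicateCol (Fin 1) u *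
        Matrix.replicateRow (Fin 1) (fun _ => (1 : Polynomial ℂ))).det
      = ∏ i, d i + ∑ i, u i * ∏ k ∈ Finset.univ.erase i, d k := by
  set φ := algebraMap (Polynomial ℂ) (RatFunc ℂ) with hφ
  apply RatFunc.algebraMap_injective ℂ
  rw [← hφ, RingHom.map_det, RingHom.mapMatrix_apply]
  have hmap : (Matrix.diagonal d + Matrix.replicateCol (Fin 1) u *
        Matrix.replicateRow (Fin 1) (fun _ => (1 : Polynomial ℂ))).map φ
      = Matrix.diagonal (fun i => φ (d i)) + Matrix.replicateCol (Fin 1) (fun i => φ (u i)) *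
        Matrix.replicateRow (Fin 1) (fun _ => (1 : RatFunc ℂ)) := by
    ext i j
    simp [Matrix.map_apply, Matrix.add_apply, Matrix.mul_apply, Matrix.diagonal_apply,
      Fin.sum_univ_one, apply_ite φ]
  have hd' : ∀ i, φ (d i) ≠ 0 := fun i =>
    (map_ne_zero_iff φ (RatFunc.algebraMap_injective ℂ)).mpr (hd i)
  rw [hmap, det_diag_add_rankone _ _ hd']
  simp only [_root_.map_add, map_sum, _root_.map_mul, map_prod]

theorem charpoly_reduced_D_companion
    (n : ℕ) (hn : 1 ≤ n) (z lam : ℕ → ℂ)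
    (hlam : ∑ j ∈ Finset.range n, lam j = 1) :
    (let D : Matrix (Fin (n - 1)) (Fin (n - 1)) ℂ :=
        Matrix.diagonal (fun i => z (i : ℕ));
     let Λ : Matrix (Fin (n - 1)) (Fin (n - 1)) ℂ :=
        Matrix.diagonal (fun i => lam (i : ℕ));
     let J : Matrix (Fin (n - 1)) (Fin (n - 1)) ℂ :=
        Matrix.of (fun _ _ => (1 : ℂ));
     (D * (1 - Λ * J) + z (n - 1) • (Λ * J)).charpoly)
      = ∑ j ∈ Finset.range n, C (lam j) *
          ∏ i ∈ (Finset.range n).erase j, (X - C (z i)) := by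
  obtain ⟨m, rfl⟩ : ∃ m, n = m + 1 := ⟨n - 1, (Nat.succ_pred_eq_of_pos hn).symm⟩
  simp only [Nat.add_sub_cancel]
  have hchar : Matrix.charmatrix
      (Matrix.diagonal (fun i : Fin m => z (i : ℕ)) *
        (1 - Matrix.diagonal (fun i : Fin m => lam (i : ℕ)) * Matrix.of (fun _ _ => (1:ℂ))) +
        z m • (Matrix.diagonal (fun i : Fin m => lam (i : ℕ)) * Matrix.of (fun _ _ => (1:ℂ))))
      = Matrix.diagonal (fun i : Fin m => X - C (z (i : ℕ))) +
        Matrix.replicateCol (Fin 1) (fun i : Fin m => C ((z (i : ℕ) - z m) * lam (i : ℕ))) *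
        Matrix.replicateRow (Fin 1) (fun _ => (1 : Polynomial ℂ)) := by
    refine Matrix.ext fun i j => ?_
    by_cases hij : i = j
    · subst hij
      rw [Matrix.charmatrix_apply_eq]
      simp [Matrix.mul_apply, Matrix.diagonal_apply, Matrix.one_apply, Fin.sum_univ_one,
        Matrix.replicateCol_apply, Matrix.replicateRow_apply, Matrix.add_apply, Matrix.sub_apply,
        Matrix.smul_apply, Matrix.of_apply, ite_mul, zero_mul, mul_ite, mul_zero,
        Finset.sum_ite_eq, Finset.sum_sub_distrib]
      ring
    · rw [Matrix.charmatrix_apply_ne _ _ _ hij]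
      simp [Matrix.mul_apply, Matrix.diagonal_apply, Matrix.one_apply, Fin.sum_univ_one,
        Matrix.replicateCol_apply, Matrix.replicateRow_apply, Matrix.add_apply, Matrix.sub_apply,
        Matrix.smul_apply, Matrix.of_apply, ite_mul, zero_mul, mul_ite, mul_zero,
        Finset.sum_ite_eq, Finset.sum_sub_distrib, hij]
      ring
  rw [Matrix.charpoly]
  have final : (Matrix.charmatrix
      (Matrix.diagonal (fun i : Fin m => z (i : ℕ)) *
        (1 - Matrix.diagonal (fun i : Fin m => lam (i : ℕ)) * Matrix.of (fun _ _ => (1:ℂ))) +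
        z m • (Matrix.diagonal (fun i : Fin m => lam (i : ℕ)) *
          Matrix.of (fun _ _ => (1:ℂ))))).det
      = ∑ j ∈ Finset.range (m + 1), C (lam j) *
          ∏ i ∈ (Finset.range (m + 1)).erase j, (X - C (z i)) := by
    rw [hchar, det_diag_add_rankone_poly m _ _ (fun i => X_sub_C_ne_zero _)]
    exact poly_id m z lam hlam
  exact final
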